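/- The weighted geometric mean commutes with congruence: (MᵀAM) #_t (MᵀBM) = Mᵀ(A #_t B)M for all symmetric positive-definite A, B, invertible M, and t ∈ [0,1]. -/

import Mathlib

open Matrix

open Classical in
/-- Real power of a symmetric matrix, via the spectral decomposition:
if `S = U diag(λ) Uᵀ` then `S^t = U diag(λ^t) Uᵀ` (junk value `S` if `S` is not symmetric). -/
noncomputable def mpow {n : ℕ} (S : Matrix (Fin n) (Fin n) ℝ) (t : ℝ) :
    Matrix (Fin n) (Fin n) ℝ :=
  if h : S.IsHermitian then
    (h.eigenvectorUnitary : Matrix (Fin n) (Fin n) ℝ) *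
      Matrix.diagonal (fun i => h.eigenvalues i ^ t) *
      star (h.eigenvectorUnitary : Matrix (Fin n) (Fin n) ℝ)
  else S

/-- The weighted geometric mean `A #_t B = A^{1/2} (A^{-1/2} B A^{-1/2})^t A^{1/2}`. -/
noncomputable def geomMean {n : ℕ} (A B : Matrix (Fin n) (Fin n) ℝ) (t : ℝ) :
    Matrix (Fin n) (Fin n) ℝ :=
  mpow A (1/2) * mpow (mpow A (-(1/2) : ℝ) * B * mpow A (-(1/2) : ℝ)) t * mpow A (1/2)

section auxpoly

open Polynomial

variable {n : ℕ}

lemma myConjPow (W V S : Matrix (Fin n) (Fin n) ℝ) (hWV : W * V = 1) (hVW : V * W = 1)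
    (k : ℕ) : (W * S * V) ^ k = W * S ^ k * V := by
  induction k with
  | zero => simp [hWV]
  | succ k ih =>
      rw [pow_succ, pow_succ, ih, show W * S ^ k * V * (W * S * V)
          = W * S ^ k * (V * W) * (S * V) by simp only [mul_assoc], hVW]
      simp only [mul_one, mul_assoc]

lemma myAevalConj (W V S : Matrix (Fin n) (Fin n) ℝ) (hWV : W * V = 1) (hVW : V * W = 1)
    (p : Polynomial ℝ) : aeval (W * S * V) p = W * aeval S p * V := by
  induction p using Polynomial.induction_on with
  | C a =>
      simp only [aeval_C, Algebra.algebraMap_eq_smul_one, mul_smul_comm, smul_mul_assoc,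
        mul_one, one_mul, hWV]
  | add p q hp hq => simp [hp, hq, mul_add, add_mul]
  | monomial a k ih =>
      rw [_root_.map_mul, _root_.map_mul, map_pow, map_pow, aeval_X, aeval_C, aeval_C,
        myConjPow W V S hWV hVW]
      simp only [aeval_X, Algebra.algebraMap_eq_smul_one, smul_mul_assoc, one_mul,
        mul_smul_comm, mul_assoc]

lemma myAevalDiagonal (d : Fin n → ℝ) (p : Polynomial ℝ) :
    aeval (Matrix.diagonal d) p = Matrix.diagonal (fun i => p.eval (d i)) := by
  induction p using Polynomial.induction_on with
  | C a => simp [Matrix.algebraMap_eq_diagonal]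
  | add p q hp hq => simp [hp, hq, Matrix.diagonal_add]
  | monomial a k ih =>
      rw [_root_.map_mul, map_pow, aeval_X, aeval_C]
      simp only [Matrix.algebraMap_eq_diagonal, Matrix.diagonal_pow, diagonal_mul_diagonal,
        eval_mul, eval_pow, eval_C, eval_X]
      congr 1

end auxpoly

section auxmpow

open Polynomial

variable {n : ℕ} {S : Matrix (Fin n) (Fin n) ℝ}

lemma myDiagCoe (h : S.IsHermitian) :
    Matrix.diagonal (RCLike.ofReal ∘ h.eigenvalues) = Matrix.diagonal h.eigenvalues := by
  rw [RCLike.ofReal_real_eq_id]; rfl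

lemma mpow_eq_aeval (h : S.IsHermitian) (t : ℝ) (p : Polynomial ℝ)
    (hp : ∀ i, p.eval (h.eigenvalues i) = h.eigenvalues i ^ t) :
    mpow S t = Polynomial.aeval S p := by
  have h1 : (h.eigenvectorUnitary : Matrix (Fin n) (Fin n) ℝ) *
      star (h.eigenvectorUnitary : Matrix (Fin n) (Fin n) ℝ) = 1 :=
    (Matrix.mem_unitaryGroup_iff).mp h.eigenvectorUnitary.2
  have h2 : star (h.eigenvectorUnitary : Matrix (Fin n) (Fin n) ℝ) *
      (h.eigenvectorUnitary : Matrix (Fin n) (Fin n) ℝ) = 1 :=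
    (Matrix.mem_unitaryGroup_iff').mp h.eigenvectorUnitary.2
  rw [mpow, dif_pos h]
  have hd : (fun i => h.eigenvalues i ^ t) = fun i => p.eval (h.eigenvalues i) := by
    funext i; rw [hp]
  rw [hd, ← myAevalDiagonal, ← myAevalConj _ _ _ h1 h2]
  have hs := h.spectral_theorem
  rw [myDiagCoe h, Unitary.conjStarAlgAut_apply] at hs
  conv_rhs => rw [hs]

lemma mpow_isHermitian (h : S.IsHermitian) (t : ℝ) : (mpow S t).IsHermitian := by
  rw [mpow, dif_pos h, Matrix.star_eq_conjTranspose]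
  exact Matrix.isHermitian_mul_mul_conjTranspose _ (Matrix.isHermitian_diagonal _)

lemma mpow_mul_mpow (hS : S.PosDef) (a b : ℝ) :
    mpow S a * mpow S b = mpow S (a + b) := by
  have h := hS.isHermitian
  rw [mpow, mpow, mpow, dif_pos h, dif_pos h, dif_pos h]
  set U : Matrix (Fin n) (Fin n) ℝ := (h.eigenvectorUnitary : Matrix (Fin n) (Fin n) ℝ)
  have h2 : star U * U = 1 := (Matrix.mem_unitaryGroup_iff').mp h.eigenvectorUnitary.2
  have : U * Matrix.diagonal (fun i => h.eigenvalues i ^ a) * star U *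
      (U * Matrix.diagonal (fun i => h.eigenvalues i ^ b) * star U)
      = U * (Matrix.diagonal (fun i => h.eigenvalues i ^ a) *
        Matrix.diagonal (fun i => h.eigenvalues i ^ b)) * star U := by
    rw [show U * Matrix.diagonal (fun i => h.eigenvalues i ^ a) * star U *
      (U * Matrix.diagonal (fun i => h.eigenvalues i ^ b) * star U)
      = U * Matrix.diagonal (fun i => h.eigenvalues i ^ a) * (star U * U) *
        (Matrix.diagonal (fun i => h.eigenvalues i ^ b) * star U) by
        simp only [mul_assoc], h2]
    simp only [mul_one, mul_assoc]
  rw [this, diagonal_mul_diagonal]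
  have hd : (fun i => h.eigenvalues i ^ a * h.eigenvalues i ^ b)
      = fun i => h.eigenvalues i ^ (a + b) := by
    funext i; exact (Real.rpow_add (hS.eigenvalues_pos i) a b).symm
  rw [hd]

lemma mpow_zero (h : S.IsHermitian) : mpow S 0 = 1 := by
  rw [mpow, dif_pos h]
  simp only [Real.rpow_zero]
  rw [show (Matrix.diagonal fun _ : Fin n => (1:ℝ)) = 1 from Matrix.diagonal_one, mul_one]
  exact (Matrix.mem_unitaryGroup_iff).mp h.eigenvectorUnitary.2

lemma mpow_one (h : S.IsHermitian) : mpow S 1 = S := by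
  rw [mpow, dif_pos h]
  simp only [Real.rpow_one]
  have hs := h.spectral_theorem
  rw [myDiagCoe h, Unitary.conjStarAlgAut_apply] at hs
  exact hs.symm

lemma mpow_conj (h : S.IsHermitian) (N : Matrix (Fin n) (Fin n) ℝ)
    (h1 : star N * N = 1) (h2 : N * star N = 1) (t : ℝ) :
    mpow (star N * S * N) t = star N * mpow S t * N := by
  have hT : (star N * S * N).IsHermitian := by
    rw [Matrix.star_eq_conjTranspose]
    exact Matrix.isHermitian_conjTranspose_mul_mul _ h
  set s : Finset ℝ :=
    (Finset.image h.eigenvalues Finset.univ) ∪ (Finset.image hT.eigenvalues Finset.univ)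
  set p : Polynomial ℝ := Lagrange.interpolate s id (fun x => x ^ t)
  have hps : ∀ x ∈ s, p.eval x = x ^ t := fun x hx =>
    Lagrange.eval_interpolate_at_node _ (Set.injOn_id _) hx
  rw [mpow_eq_aeval h t p (fun i => hps _ (Finset.mem_union_left _
        (Finset.mem_image_of_mem _ (Finset.mem_univ i)))),
    mpow_eq_aeval hT t p (fun i => hps _ (Finset.mem_union_right _
        (Finset.mem_image_of_mem _ (Finset.mem_univ i)))),
    myAevalConj (star N) N S h1 h2]

lemma mpow_neg_half_mul (hS : S.PosDef) :
    mpow S (-(1/2) : ℝ) * (S * mpow S (-(1/2) : ℝ)) = 1 := by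
  conv_lhs => rw [show S * mpow S (-(1/2) : ℝ) = mpow S 1 * mpow S (-(1/2) : ℝ) by
    rw [mpow_one hS.isHermitian]]
  rw [← mul_assoc, mpow_mul_mpow hS, mpow_mul_mpow hS,
    show (-(1/2) + 1 + -(1/2) : ℝ) = 0 by norm_num, mpow_zero hS.isHermitian]

end auxmpow

theorem geomMean_congruence {n : ℕ} (A B M : Matrix (Fin n) (Fin n) ℝ)
    (hA : A.PosDef) (hB : B.PosDef) (hM : IsUnit M.det)
    (t : ℝ) (ht : t ∈ Set.Icc (0:ℝ) 1) :
    geomMean (Mᵀ * A * M) (Mᵀ * B * M) t = Mᵀ * geomMean A B t * M := by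
  have hMt : Mᵀ = star M := by
    rw [Matrix.star_eq_conjTranspose, Matrix.conjTranspose_eq_transpose_of_trivial]
  rw [hMt]
  have hMunit : IsUnit M := (Matrix.isUnit_iff_isUnit_det M).mpr hM
  -- C := star M * A * M is positive definite
  have hC : (star M * A * M).PosDef := by
    refine posDef_iff_dotProduct_mulVec.mpr ⟨?_, ?_⟩
    · rw [Matrix.star_eq_conjTranspose]
      exact Matrix.isHermitian_conjTranspose_mul_mul _ hA.isHermitian
    · intro x hx
      have hMx : M *ᵥ x ≠ 0 := by
        intro hc
        exact hx ((Matrix.mulVec_injective_iff_isUnit.mpr hMunit) (by simp [hc]))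
      have e : star x ⬝ᵥ ((star M * A * M) *ᵥ x)
          = star (M *ᵥ x) ⬝ᵥ (A *ᵥ (M *ᵥ x)) := by
        rw [← Matrix.mulVec_mulVec, ← Matrix.mulVec_mulVec,
          Matrix.dotProduct_mulVec (star x) (star M),
          Matrix.star_eq_conjTranspose, Matrix.vecMul_conjTranspose, star_star]
      rw [e]
      exact hA.dotProduct_mulVec_pos hMx
  -- basic cancellation facts
  have kA0 : mpow A (1/2) * mpow A (-(1/2) : ℝ) = 1 := by
    rw [mpow_mul_mpow hA, show (1/2 + -(1/2) : ℝ) = 0 by norm_num, mpow_zero hA.isHermitian]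
  have kA0' : mpow A (-(1/2) : ℝ) * mpow A (1/2) = 1 := by
    rw [mpow_mul_mpow hA, show (-(1/2) + 1/2 : ℝ) = 0 by norm_num, mpow_zero hA.isHermitian]
  have kA1 : mpow A (1/2) * mpow A (1/2) = A := by
    rw [mpow_mul_mpow hA, show (1/2 + 1/2 : ℝ) = 1 by norm_num, mpow_one hA.isHermitian]
  have kC0 : mpow (star M * A * M) (1/2) * mpow (star M * A * M) (-(1/2) : ℝ) = 1 := by
    rw [mpow_mul_mpow hC, show (1/2 + -(1/2) : ℝ) = 0 by norm_num, mpow_zero hC.isHermitian]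
  have kC0' : mpow (star M * A * M) (-(1/2) : ℝ) * mpow (star M * A * M) (1/2) = 1 := by
    rw [mpow_mul_mpow hC, show (-(1/2) + 1/2 : ℝ) = 0 by norm_num, mpow_zero hC.isHermitian]
  have hPQz : ∀ Z, mpow A (1/2) * (mpow A (-(1/2) : ℝ) * Z) = Z := fun Z => by
    rw [← mul_assoc, kA0, one_mul]
  have hQPz : ∀ Z, mpow A (-(1/2) : ℝ) * (mpow A (1/2) * Z) = Z := fun Z => by
    rw [← mul_assoc, kA0', one_mul]
  have hPPz : ∀ Z, mpow A (1/2) * (mpow A (1/2) * Z) = A * Z := fun Z => by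
    rw [← mul_assoc, kA1]
  have hRR'z : ∀ Z, mpow (star M * A * M) (1/2) *
      (mpow (star M * A * M) (-(1/2) : ℝ) * Z) = Z := fun Z => by
    rw [← mul_assoc, kC0, one_mul]
  -- star of mpow is mpow
  have hsP : star (mpow A (1/2)) = mpow A (1/2) := by
    rw [Matrix.star_eq_conjTranspose]; exact mpow_isHermitian hA.isHermitian _
  have hsQ : star (mpow A (-(1/2) : ℝ)) = mpow A (-(1/2) : ℝ) := by
    rw [Matrix.star_eq_conjTranspose]; exact mpow_isHermitian hA.isHermitian _
  have hsR' : star (mpow (star M * A * M) (-(1/2) : ℝ))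
      = mpow (star M * A * M) (-(1/2) : ℝ) := by
    rw [Matrix.star_eq_conjTranspose]; exact mpow_isHermitian hC.isHermitian _
  -- N := mpow A (1/2) * M * mpow C (-(1/2)) is orthogonal
  have hstarN : star (mpow A (1/2) * M * mpow (star M * A * M) (-(1/2) : ℝ))
      = mpow (star M * A * M) (-(1/2) : ℝ) * star M * mpow A (1/2) := by
    rw [StarMul.star_mul, StarMul.star_mul, hsP, hsR',
      mul_assoc (mpow (star M * A * M) (-(1/2) : ℝ)) (star M) (mpow A (1/2))]
  have hNsN : star (mpow A (1/2) * M * mpow (star M * A * M) (-(1/2) : ℝ)) *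
      (mpow A (1/2) * M * mpow (star M * A * M) (-(1/2) : ℝ)) = 1 := by
    rw [hstarN]
    set P := mpow A (1/2) with hPdef
    set R' := mpow (star M * A * M) (-(1/2) : ℝ) with hR'def
    simp only [mul_assoc]
    rw [hPPz]
    rw [show star M * (A * (M * R')) = (star M * A * M) * R' by simp only [mul_assoc]]
    exact mpow_neg_half_mul hC
  have hNNs : (mpow A (1/2) * M * mpow (star M * A * M) (-(1/2) : ℝ)) *
      star (mpow A (1/2) * M * mpow (star M * A * M) (-(1/2) : ℝ)) = 1 :=
    mul_eq_one_comm.mp hNsN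
  -- the middle matrix X is symmetric
  have hX : (mpow A (-(1/2) : ℝ) * B * mpow A (-(1/2) : ℝ)).IsHermitian := by
    show (mpow A (-(1/2) : ℝ) * B * mpow A (-(1/2) : ℝ))ᴴ
        = mpow A (-(1/2) : ℝ) * B * mpow A (-(1/2) : ℝ)
    rw [conjTranspose_mul, conjTranspose_mul,
      show (mpow A (-(1/2) : ℝ))ᴴ = mpow A (-(1/2) : ℝ) from mpow_isHermitian hA.isHermitian _,
      show Bᴴ = B from hB.isHermitian, mul_assoc]
  -- conjugation identity for the middle mpow
  have hconj := mpow_conj hX (mpow A (1/2) * M * mpow (star M * A * M) (-(1/2) : ℝ))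
    hNsN hNNs t
  rw [hstarN] at hconj
  have harg : (mpow (star M * A * M) (-(1/2) : ℝ) * star M * mpow A (1/2)) *
      (mpow A (-(1/2) : ℝ) * B * mpow A (-(1/2) : ℝ)) *
      (mpow A (1/2) * M * mpow (star M * A * M) (-(1/2) : ℝ))
      = mpow (star M * A * M) (-(1/2) : ℝ) * (star M * B * M) *
        mpow (star M * A * M) (-(1/2) : ℝ) := by
    simp only [mul_assoc]
    rw [hQPz, hPQz]
  rw [harg] at hconj
  rw [geomMean, geomMean, hconj]
  set Xt := mpow (mpow A (-(1/2) : ℝ) * B * mpow A (-(1/2) : ℝ)) t with hXtdef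
  set P := mpow A (1/2) with hPdef
  set R := mpow (star M * A * M) (1/2) with hRdef
  set R' := mpow (star M * A * M) (-(1/2) : ℝ) with hR'def
  simp only [mul_assoc]
  rw [kC0', mul_one, hRR'z]
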